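/- arXiv:cond-mat/0504304 — 4 statements merged into one kernel-verified Lean document; each statement's English description precedes it below -/
import Mathlib

section
/- Let H : ℝ → Matrix (Fin 4) (Fin 4) ℝ be continuous with H(x) symmetric for every x, and let U : ℝ → Matrix (Fin 4) (Fin 4) ℝ satisfy the matrix ODE U'(x) = J · H(x) · U(x) for all x with U(0) = I (i.e., HasDerivAt U (J * H x * U x) x for all x). Then for every x, U(x)ᵀ · J · U(x) = J (the Poincaré–Liouville theorem: the fundamental solution of a linear Hamiltonian system is symplectic). -/
open Matrix

attribute [local instance] Matrix.normedAddCommGroup Matrix.normedSpace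

/-- The canonical 4×4 symplectic matrix `J = fromBlocks 0 1 (-1) 0`. -/
noncomputable def Jmat : Matrix (Fin 4) (Fin 4) ℝ :=
  Matrix.reindex finSumFinEquiv finSumFinEquiv
    (Matrix.fromBlocks (0 : Matrix (Fin 2) (Fin 2) ℝ) (1 : Matrix (Fin 2) (Fin 2) ℝ)
      (-1 : Matrix (Fin 2) (Fin 2) ℝ) (0 : Matrix (Fin 2) (Fin 2) ℝ))

lemma Jmat_transpose : Jmatᵀ = -Jmat := by
  have h : (Matrix.fromBlocks (0 : Matrix (Fin 2) (Fin 2) ℝ) (1 : Matrix (Fin 2) (Fin 2) ℝ)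
        (-1 : Matrix (Fin 2) (Fin 2) ℝ) (0 : Matrix (Fin 2) (Fin 2) ℝ))ᵀ
      = -(Matrix.fromBlocks (0 : Matrix (Fin 2) (Fin 2) ℝ) (1 : Matrix (Fin 2) (Fin 2) ℝ)
        (-1 : Matrix (Fin 2) (Fin 2) ℝ) (0 : Matrix (Fin 2) (Fin 2) ℝ)) := by
    rw [Matrix.fromBlocks_transpose, Matrix.fromBlocks_neg]
    simp
  simp only [Jmat, Matrix.reindex_apply, Matrix.transpose_submatrix, h,
    Matrix.submatrix_neg, Pi.neg_apply]

lemma Jmat_mul_Jmat : Jmat * Jmat = -1 := by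
  have h : (Matrix.fromBlocks (0 : Matrix (Fin 2) (Fin 2) ℝ) (1 : Matrix (Fin 2) (Fin 2) ℝ)
        (-1 : Matrix (Fin 2) (Fin 2) ℝ) (0 : Matrix (Fin 2) (Fin 2) ℝ))
      * Matrix.fromBlocks (0 : Matrix (Fin 2) (Fin 2) ℝ) (1 : Matrix (Fin 2) (Fin 2) ℝ)
        (-1 : Matrix (Fin 2) (Fin 2) ℝ) (0 : Matrix (Fin 2) (Fin 2) ℝ)
      = (-1 : Matrix (Fin 2 ⊕ Fin 2) (Fin 2 ⊕ Fin 2) ℝ) := by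
    rw [Matrix.fromBlocks_multiply, ← Matrix.fromBlocks_one, Matrix.fromBlocks_neg]
    simp
  simp only [Jmat, Matrix.reindex_apply, Matrix.submatrix_mul_equiv, h,
    Matrix.submatrix_neg, Pi.neg_apply, Matrix.submatrix_one_equiv]

private noncomputable abbrev Mspace := Matrix (Fin 4) (Fin 4) ℝ

/-- The bilinear map `(A, C) ↦ Aᵀ * Jmat * C` as a continuous bilinear map. -/
noncomputable def Bmap : Mspace →L[ℝ] Mspace →L[ℝ] Mspace :=
  LinearMap.toContinuousLinearMap
    { toFun := fun A => LinearMap.toContinuousLinearMap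
        { toFun := fun C => Aᵀ * Jmat * C
          map_add' := fun C D => by simp [Matrix.mul_add]
          map_smul' := fun r C => by simp [Matrix.mul_smul] }
      map_add' := fun A B => by
        ext C : 1
        simp [Matrix.transpose_add, Matrix.add_mul]
      map_smul' := fun r A => by
        ext C : 1
        simp [Matrix.transpose_smul, Matrix.smul_mul] }

lemma Bmap_apply (A C : Mspace) : Bmap A C = Aᵀ * Jmat * C := rfl

/-- **Poincaré–Liouville theorem**: the fundamental solution of a linear
Hamiltonian system is symplectic. -/
theorem poincare_liouville
    (H U : ℝ → Matrix (Fin 4) (Fin 4) ℝ)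
    (hHcont : Continuous H)
    (hHsym : ∀ x, (H x)ᵀ = H x)
    (hU : ∀ x, HasDerivAt U (Jmat * H x * U x) x)
    (hU0 : U 0 = 1) :
    ∀ x, (U x)ᵀ * Jmat * U x = Jmat := by
  set F : ℝ → Mspace := fun x => Bmap (U x) (U x) with hFdef
  have hJJ : ∀ X : Mspace, Jmat * (Jmat * X) = -X := by
    intro X
    rw [← Matrix.mul_assoc, Jmat_mul_Jmat, Matrix.neg_mul, Matrix.one_mul]
  have hF : ∀ x, HasDerivAt F 0 x := by
    intro x
    have h := Bmap.hasDerivAt_of_bilinear (fun _ => hU x) (fun _ => hU x)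
    have hzero : Bmap (U x) (Jmat * H x * U x) + Bmap (Jmat * H x * U x) (U x) = 0 := by
      simp only [Bmap_apply, Matrix.transpose_mul, Jmat_transpose, hHsym,
        Matrix.mul_assoc, Matrix.neg_mul, Matrix.mul_neg, hJJ, neg_neg]
      abel
    exact h.congr_deriv hzero
  have hdiff : Differentiable ℝ F := fun x => (hF x).differentiableAt
  have hderiv : ∀ x, deriv F x = 0 := fun x => (hF x).deriv
  intro x
  have hconst : F x = F 0 := is_const_of_deriv_eq_zero hdiff hderiv x 0
  rw [show (U x)ᵀ * Jmat * U x = F x from rfl, hconst]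
  simp [hFdef, Bmap_apply, hU0]
end

section
/- Let M be a 4×4 real matrix with Mᵀ · J · M = J. Then the characteristic polynomial of M is palindromic and given explicitly by det(M − λI) = 1 + aλ + bλ² + aλ³ + λ⁴, where a = −Tr(M) and b = ½((Tr M)² − Tr(M²)). Equivalently, the characteristic polynomial of M equals X⁴ − (Tr M)·X³ + ½((Tr M)² − Tr(M²))·X² − (Tr M)·X + 1. -/
open Matrix Polynomial

lemma Jmat_eq : Jmat = !![0,0,1,0;0,0,0,1;(-1),0,0,0;0,(-1),0,0] := by
  ext i j
  fin_cases i <;> fin_cases j <;>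
    simp (config := { decide := true }) [Jmat, Matrix.fromBlocks, finSumFinEquiv, Fin.addCases,
      Matrix.one_apply, Fin.ext_iff, Fin.castLT, Fin.subNat, Matrix.vecHead, Matrix.vecTail]

lemma det_fin_four' (A : Matrix (Fin 4) (Fin 4) ℝ) :
    det A =
      A 0 0*A 1 1*A 2 2*A 3 3 - A 0 0*A 1 1*A 2 3*A 3 2 - A 0 0*A 1 2*A 2 1*A 3 3
      + A 0 0*A 1 2*A 2 3*A 3 1 + A 0 0*A 1 3*A 2 1*A 3 2 - A 0 0*A 1 3*A 2 2*A 3 1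
      - A 0 1*A 1 0*A 2 2*A 3 3 + A 0 1*A 1 0*A 2 3*A 3 2 + A 0 1*A 1 2*A 2 0*A 3 3
      - A 0 1*A 1 2*A 2 3*A 3 0 - A 0 1*A 1 3*A 2 0*A 3 2 + A 0 1*A 1 3*A 2 2*A 3 0
      + A 0 2*A 1 0*A 2 1*A 3 3 - A 0 2*A 1 0*A 2 3*A 3 1 - A 0 2*A 1 1*A 2 0*A 3 3
      + A 0 2*A 1 1*A 2 3*A 3 0 + A 0 2*A 1 3*A 2 0*A 3 1 - A 0 2*A 1 3*A 2 1*A 3 0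
      - A 0 3*A 1 0*A 2 1*A 3 2 + A 0 3*A 1 0*A 2 2*A 3 1 + A 0 3*A 1 1*A 2 0*A 3 2
      - A 0 3*A 1 1*A 2 2*A 3 0 - A 0 3*A 1 2*A 2 0*A 3 1 + A 0 3*A 1 2*A 2 1*A 3 0 := by
  rw [Matrix.det_succ_row_zero]
  simp [Fin.sum_univ_succ, Matrix.det_fin_three, Fin.succAbove,
    show (Fin.succ 2 : Fin 4) = 3 from rfl, show ((2 : Fin 3).castSucc : Fin 4) = 2 from rfl]
  ring

set_option maxHeartbeats 1000000 in
/-- The characteristic polynomial of a 4×4 symplectic matrix is palindromic. -/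
theorem symplectic_charpoly_palindromic
    (M : Matrix (Fin 4) (Fin 4) ℝ) (hM : Mᵀ * Jmat * M = Jmat) :
    (∀ lam : ℝ, (M - lam • (1 : Matrix (Fin 4) (Fin 4) ℝ)).det =
        1 + (-M.trace) * lam + ((M.trace ^ 2 - (M * M).trace) / 2) * lam ^ 2
          + (-M.trace) * lam ^ 3 + lam ^ 4) ∧
      M.charpoly = X ^ 4 - C M.trace * X ^ 3
          + C ((M.trace ^ 2 - (M * M).trace) / 2) * X ^ 2 - C M.trace * X + 1 := by
  rw [Jmat_eq] at hM
  have k01 := congrFun (congrFun hM 0) 1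
  have k02 := congrFun (congrFun hM 0) 2
  have k03 := congrFun (congrFun hM 0) 3
  have k12 := congrFun (congrFun hM 1) 2
  have k13 := congrFun (congrFun hM 1) 3
  have k23 := congrFun (congrFun hM 2) 3
  simp [Matrix.mul_apply, Fin.sum_univ_four] at k01 k02 k03 k12 k13 k23
  have h01 : M 0 0 * M 2 1 + M 1 0 * M 3 1 - M 2 0 * M 0 1 - M 3 0 * M 1 1 = 0 := by
    linear_combination k01
  have h02 : M 0 0 * M 2 2 + M 1 0 * M 3 2 - M 2 0 * M 0 2 - M 3 0 * M 1 2 = 1 := by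
    linear_combination k02
  have h03 : M 0 0 * M 2 3 + M 1 0 * M 3 3 - M 2 0 * M 0 3 - M 3 0 * M 1 3 = 0 := by
    linear_combination k03
  have h12 : M 0 1 * M 2 2 + M 1 1 * M 3 2 - M 2 1 * M 0 2 - M 3 1 * M 1 2 = 0 := by
    linear_combination k12
  have h13 : M 0 1 * M 2 3 + M 1 1 * M 3 3 - M 2 1 * M 0 3 - M 3 1 * M 1 3 = 1 := by
    linear_combination k13
  have h23 : M 0 2 * M 2 3 + M 1 2 * M 3 3 - M 2 2 * M 0 3 - M 3 2 * M 1 3 = 0 := by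
    linear_combination k23
  have htr : M.trace = M 0 0 + M 1 1 + M 2 2 + M 3 3 := by
    simp [Matrix.trace, Fin.sum_univ_four]
  have htr2 : (M * M).trace =
      (M 0 0 * M 0 0 + M 0 1 * M 1 0 + M 0 2 * M 2 0 + M 0 3 * M 3 0)
      + (M 1 0 * M 0 1 + M 1 1 * M 1 1 + M 1 2 * M 2 1 + M 1 3 * M 3 1)
      + (M 2 0 * M 0 2 + M 2 1 * M 1 2 + M 2 2 * M 2 2 + M 2 3 * M 3 2)
      + (M 3 0 * M 0 3 + M 3 1 * M 1 3 + M 3 2 * M 2 3 + M 3 3 * M 3 3) := by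
    simp [Matrix.trace, Fin.sum_univ_four, Matrix.mul_apply]
  have hentry : ∀ i j : Fin 4, ∀ lam : ℝ,
      (M - lam • (1 : Matrix (Fin 4) (Fin 4) ℝ)) i j = M i j - lam * (if i = j then 1 else 0) := by
    intro i j lam
    simp [Matrix.sub_apply, Matrix.one_apply]
  have main : ∀ lam : ℝ, (M - lam • (1 : Matrix (Fin 4) (Fin 4) ℝ)).det =
      1 + (-M.trace) * lam + ((M.trace ^ 2 - (M * M).trace) / 2) * lam ^ 2
        + (-M.trace) * lam ^ 3 + lam ^ 4 := by
    intro lam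
    rw [det_fin_four', htr, htr2]
    simp only [hentry, Fin.reduceEq, reduceIte, mul_one, mul_zero, sub_zero]
    linear_combination
      (-(M 0 2 * M 2 3 + M 1 2 * M 3 3 - M 2 2 * M 0 3 - M 3 2 * M 1 3)
        + lam * (-M 0 3 + M 1 2)) * h01
      + ((M 0 1 * M 2 3 + M 1 1 * M 3 3 - M 2 1 * M 0 3 - M 3 1 * M 1 3)
        + lam * (-M 1 1 - M 3 3)) * h02
      + (-(M 0 1 * M 2 2 + M 1 1 * M 3 2 - M 2 1 * M 0 2 - M 3 1 * M 1 2)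
        + lam * (M 0 1 + M 3 2)) * h03
      + (lam * (M 1 0 + M 2 3)) * h12
      + (1 + lam * (-M 0 0 - M 2 2)) * h13
      + (lam * (M 2 1 - M 3 0)) * h23
  refine ⟨main, ?_⟩
  apply Polynomial.funext
  intro x
  have hev : Polynomial.eval x M.charpoly = (x • (1 : Matrix (Fin 4) (Fin 4) ℝ) - M).det := by
    rw [Matrix.charpoly, ← Polynomial.coe_evalRingHom, RingHom.map_det]
    congr 1
    ext i j
    by_cases hij : i = j
    · subst hij
      simp [Matrix.charmatrix_apply_eq, Matrix.one_apply]
    · simp [Matrix.charmatrix_apply_ne _ _ _ hij, Matrix.one_apply, hij]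
  have hneg : (x • (1 : Matrix (Fin 4) (Fin 4) ℝ) - M).det
      = (M - x • (1 : Matrix (Fin 4) (Fin 4) ℝ)).det := by
    rw [show x • (1 : Matrix (Fin 4) (Fin 4) ℝ) - M = -(M - x • 1) from (neg_sub _ _).symm,
      Matrix.det_neg]
    norm_num
  rw [hev, hneg, main x]
  simp [Polynomial.eval_add, Polynomial.eval_mul, Polynomial.eval_pow]
  ring
end

section
/- Let M be a 4×4 real matrix with Mᵀ · J · M = J. Suppose D := 2·Tr(M²) − (Tr M)² + 8 > 0 and that K₊ := (Tr M + √D)/2 satisfies −2 < K₊ < 2. Then M has a non-real complex eigenvalue of modulus 1; in particular the symplectic period map M has (at least) two eigenvalues on the unit circle. -/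
open Matrix

/-- Explicit form of `Jmat`. -/
def JmatAux : Matrix (Fin 4) (Fin 4) ℝ := !![0,0,1,0; 0,0,0,1; -1,0,0,0; 0,-1,0,0]

lemma Jmat_eq_s9 : Jmat = JmatAux := by
  ext i j
  fin_cases i <;> fin_cases j <;>
    norm_num [Jmat, JmatAux, Matrix.reindex_apply, Matrix.submatrix_apply, Matrix.fromBlocks,
      finSumFinEquiv, Fin.addCases, Matrix.one_apply, Fin.ext_iff, Matrix.vecHead,
      Matrix.vecTail, Fin.subNat, Fin.castLT]

lemma detFourAux {R : Type*} [CommRing R] (A : Matrix (Fin 4) (Fin 4) R) : A.det =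
    A 0 0 * (A 1 1 * (A 2 2 * A 3 3 - A 2 3 * A 3 2) - A 1 2 * (A 2 1 * A 3 3 - A 2 3 * A 3 1)
      + A 1 3 * (A 2 1 * A 3 2 - A 2 2 * A 3 1))
  - A 0 1 * (A 1 0 * (A 2 2 * A 3 3 - A 2 3 * A 3 2) - A 1 2 * (A 2 0 * A 3 3 - A 2 3 * A 3 0)
      + A 1 3 * (A 2 0 * A 3 2 - A 2 2 * A 3 0))
  + A 0 2 * (A 1 0 * (A 2 1 * A 3 3 - A 2 3 * A 3 1) - A 1 1 * (A 2 0 * A 3 3 - A 2 3 * A 3 0)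
      + A 1 3 * (A 2 0 * A 3 1 - A 2 1 * A 3 0))
  - A 0 3 * (A 1 0 * (A 2 1 * A 3 2 - A 2 2 * A 3 1) - A 1 1 * (A 2 0 * A 3 2 - A 2 2 * A 3 0)
      + A 1 2 * (A 2 0 * A 3 1 - A 2 1 * A 3 0)) := by
  rw [Matrix.det_succ_row_zero]
  simp [Fin.sum_univ_succ, Matrix.det_fin_three, Matrix.submatrix_apply, Fin.succAbove]
  ring

lemma traceFourAux {R : Type*} [CommRing R] (A : Matrix (Fin 4) (Fin 4) R) :
    A.trace = A 0 0 + A 1 1 + A 2 2 + A 3 3 := by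
  simp [Matrix.trace, Matrix.diag, Fin.sum_univ_four]

lemma adjTraceFourAux {R : Type*} [CommRing R] (A : Matrix (Fin 4) (Fin 4) R) :
    A.adjugate.trace =
      (A 1 1 * (A 2 2 * A 3 3 - A 2 3 * A 3 2) - A 1 2 * (A 2 1 * A 3 3 - A 2 3 * A 3 1)
        + A 1 3 * (A 2 1 * A 3 2 - A 2 2 * A 3 1))
      + (A 0 0 * (A 2 2 * A 3 3 - A 2 3 * A 3 2) - A 0 2 * (A 2 0 * A 3 3 - A 2 3 * A 3 0)
        + A 0 3 * (A 2 0 * A 3 2 - A 2 2 * A 3 0))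
      + (A 0 0 * (A 1 1 * A 3 3 - A 1 3 * A 3 1) - A 0 1 * (A 1 0 * A 3 3 - A 1 3 * A 3 0)
        + A 0 3 * (A 1 0 * A 3 1 - A 1 1 * A 3 0))
      + (A 0 0 * (A 1 1 * A 2 2 - A 1 2 * A 2 1) - A 0 1 * (A 1 0 * A 2 2 - A 1 2 * A 2 0)
        + A 0 2 * (A 1 0 * A 2 1 - A 1 1 * A 2 0)) := by
  rw [traceFourAux]
  simp only [Matrix.adjugate_apply, detFourAux]
  norm_num [Matrix.updateRow_apply, Pi.single_apply, Fin.ext_iff,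
    show ((0:Fin 4):ℕ) = 0 from rfl, show ((1:Fin 4):ℕ) = 1 from rfl,
    show ((2:Fin 4):ℕ) = 2 from rfl, show ((3:Fin 4):ℕ) = 3 from rfl]
  ring

/-- Characteristic polynomial of a 4×4 matrix evaluated at `z`. -/
lemma charpolyFour (N : Matrix (Fin 4) (Fin 4) ℂ) (z : ℂ) :
    (N - z • (1 : Matrix (Fin 4) (Fin 4) ℂ)).det =
      z ^ 4 - N.trace * z ^ 3 + ((N.trace ^ 2 - (N * N).trace) / 2) * z ^ 2
        - N.adjugate.trace * z + N.det := by
  rw [detFourAux, adjTraceFourAux, traceFourAux, traceFourAux, detFourAux]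
  simp only [Matrix.sub_apply, Matrix.smul_apply, Matrix.one_apply, Matrix.mul_apply,
    Fin.sum_univ_four, smul_eq_mul]
  norm_num [Fin.ext_iff, show ((0:Fin 4):ℕ) = 0 from rfl, show ((1:Fin 4):ℕ) = 1 from rfl,
    show ((2:Fin 4):ℕ) = 2 from rfl, show ((3:Fin 4):ℕ) = 3 from rfl]
  ring

lemma pfaffianDetAux (M : Matrix (Fin 4) (Fin 4) ℝ) :
    (Mᵀ * JmatAux * M) 0 1 * (Mᵀ * JmatAux * M) 2 3
      - (Mᵀ * JmatAux * M) 0 2 * (Mᵀ * JmatAux * M) 1 3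
      + (Mᵀ * JmatAux * M) 0 3 * (Mᵀ * JmatAux * M) 1 2 = - M.det := by
  rw [detFourAux]
  simp only [Matrix.mul_apply, Matrix.transpose_apply, Fin.sum_univ_four, JmatAux]
  norm_num [Matrix.cons_val_zero, Matrix.cons_val_one, Matrix.vecHead, Matrix.vecTail, Matrix.cons_val_two, Matrix.cons_val_three, Matrix.tail_cons]
  ring

lemma JmatAux_sq : JmatAux * JmatAux = -1 := by
  ext i j
  fin_cases i <;> fin_cases j <;>
    norm_num [JmatAux, Matrix.mul_apply, Fin.sum_univ_four, Matrix.one_apply, Fin.ext_iff,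
      Matrix.vecHead, Matrix.vecTail, Matrix.cons_val_two, Matrix.cons_val_three, Matrix.tail_cons]

lemma detSymp (M : Matrix (Fin 4) (Fin 4) ℝ) (hM : Mᵀ * JmatAux * M = JmatAux) :
    M.det = 1 := by
  have h := pfaffianDetAux M
  rw [hM] at h
  norm_num [JmatAux, Matrix.cons_val_two, Matrix.cons_val_three, Matrix.tail_cons] at h
  linarith

lemma adjTraceSymp (M : Matrix (Fin 4) (Fin 4) ℝ) (hM : Mᵀ * JmatAux * M = JmatAux) :
    M.adjugate.trace = M.trace := by
  have hdet := detSymp M hM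
  have hu : IsUnit M.det := by rw [hdet]; exact isUnit_one
  have hinv : M * M⁻¹ = 1 := Matrix.mul_nonsing_inv M hu
  have hadj : M⁻¹ = M.adjugate := by
    apply Matrix.inv_eq_right_inv
    rw [Matrix.mul_adjugate, hdet, one_smul]
  have hJ1 : JmatAux * (-JmatAux) = 1 := by rw [Matrix.mul_neg, JmatAux_sq]; simp
  have hJ2 : (-JmatAux) * JmatAux = 1 := by rw [Matrix.neg_mul, JmatAux_sq]; simp
  have h1 : Mᵀ * JmatAux = JmatAux * M⁻¹ := by
    have h := congrArg (· * M⁻¹) hM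
    simpa [mul_assoc, hinv] using h
  have h2 : Mᵀ = JmatAux * M⁻¹ * (-JmatAux) := by
    calc Mᵀ = Mᵀ * JmatAux * (-JmatAux) := by rw [mul_assoc, hJ1, mul_one]
    _ = JmatAux * M⁻¹ * (-JmatAux) := by rw [h1]
  have h3 : M.trace = M⁻¹.trace := by
    conv_lhs => rw [← Matrix.trace_transpose, h2]
    rw [Matrix.trace_mul_comm, ← mul_assoc, hJ2, one_mul]
  rw [← hadj, ← h3]

/-- If the Floquet discriminant `K₊ = (Tr M + √(2Tr M² − (Tr M)² + 8))/2` of a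
4×4 symplectic period map `M` lies in `(−2, 2)` (with the discriminant
`D = 2Tr M² − (Tr M)² + 8 > 0`), then `M` has a non-real complex eigenvalue of
modulus 1; in particular `M` has two eigenvalues on the unit circle. -/
theorem symplectic_eigenvalues_on_unit_circle
    (M : Matrix (Fin 4) (Fin 4) ℝ) (hM : Mᵀ * Jmat * M = Jmat)
    (hD : 0 < 2 * (M * M).trace - M.trace ^ 2 + 8)
    (hK1 : -2 < (M.trace + Real.sqrt (2 * (M * M).trace - M.trace ^ 2 + 8)) / 2)
    (hK2 : (M.trace + Real.sqrt (2 * (M * M).trace - M.trace ^ 2 + 8)) / 2 < 2) :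
    ∃ z₁ z₂ : ℂ, z₁ ≠ z₂ ∧ z₁.im ≠ 0 ∧ z₂.im ≠ 0 ∧
      ‖z₁‖ = 1 ∧ ‖z₂‖ = 1 ∧
      (M.map Complex.ofReal - z₁ • (1 : Matrix (Fin 4) (Fin 4) ℂ)).det = 0 ∧
      (M.map Complex.ofReal - z₂ • (1 : Matrix (Fin 4) (Fin 4) ℂ)).det = 0 := by
  rw [Jmat_eq_s9] at hM
  -- facts about the complexified matrix, before introducing abbreviations
  set N : Matrix (Fin 4) (Fin 4) ℂ := M.map Complex.ofReal with hN
  have hmapN : N = Complex.ofRealHom.mapMatrix M := rfl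
  have hNtr : N.trace = (M.trace : ℂ) := by
    rw [traceFourAux, traceFourAux M]; push_cast [hN, Matrix.map_apply]; ring
  have hNmul : N * N = Complex.ofRealHom.mapMatrix (M * M) := by
    rw [hmapN, ← _root_.map_mul]
  have hNtr2 : (N * N).trace = ((M * M).trace : ℂ) := by
    rw [hNmul, traceFourAux, traceFourAux (M * M)]
    push_cast [RingHom.mapMatrix_apply, Matrix.map_apply, Complex.ofRealHom_eq_coe]; ring
  have hNadj : N.adjugate.trace = (M.trace : ℂ) := by
    rw [hmapN, ← RingHom.map_adjugate, ← adjTraceSymp M hM,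
      RingHom.mapMatrix_apply, traceFourAux, traceFourAux M.adjugate]
    push_cast [Matrix.map_apply, Complex.ofRealHom_eq_coe]; ring
  have hNdet : N.det = 1 := by
    rw [hmapN, ← RingHom.map_det, detSymp M hM]
    norm_num
  set a : ℝ := M.trace with ha
  set t : ℝ := (M * M).trace with ht
  set s : ℝ := Real.sqrt (2 * t - a ^ 2 + 8) with hs
  set K : ℝ := (a + s) / 2 with hK
  -- the quadratic relation for K
  have hsq : s ^ 2 = 2 * t - a ^ 2 + 8 := Real.sq_sqrt hD.le
  have hq : K ^ 2 - a * K + (a ^ 2 - t) / 2 - 2 = 0 := by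
    rw [hK]
    linear_combination (1 / 4 : ℝ) * hsq
  -- K ∈ (-2, 2)
  have hK4 : 0 < 4 - K ^ 2 := by nlinarith [hK1, hK2]
  set u : ℝ := Real.sqrt (4 - K ^ 2) with hu
  have hu2 : u ^ 2 = 4 - K ^ 2 := Real.sq_sqrt hK4.le
  have hupos : 0 < u := Real.sqrt_pos.mpr hK4
  -- the two eigenvalues
  set z₁ : ℂ := (K / 2 : ℝ) + (u / 2 : ℝ) * Complex.I with hz₁
  set z₂ : ℂ := (K / 2 : ℝ) - (u / 2 : ℝ) * Complex.I with hz₂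
  have him1 : z₁.im = u / 2 := by simp [hz₁]
  have him2 : z₂.im = -(u / 2) := by simp [hz₂]
  have hre1 : z₁.re = K / 2 := by simp [hz₁]
  have hre2 : z₂.re = K / 2 := by simp [hz₂]
  -- char poly evaluated at eigenvalues
  have hqc : (K : ℂ) ^ 2 - (a : ℂ) * K + ((a : ℂ) ^ 2 - (t : ℂ)) / 2 - 2 = 0 := by
    exact_mod_cast congrArg (Complex.ofReal ·) hq
  have hu2c : (u : ℂ) ^ 2 = 4 - (K : ℂ) ^ 2 := by exact_mod_cast congrArg (Complex.ofReal ·) hu2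
  have key : ∀ z : ℂ, z ^ 2 - (K : ℂ) * z + 1 = 0 →
      (N - z • (1 : Matrix (Fin 4) (Fin 4) ℂ)).det = 0 := by
    intro z hz
    rw [charpolyFour, hNtr, hNtr2, hNadj, hNdet]
    linear_combination (z ^ 2 - ((a : ℂ) - K) * z + 1) * hz + z ^ 2 * hqc
  have hz₁q : z₁ ^ 2 - (K : ℂ) * z₁ + 1 = 0 := by
    rw [hz₁]
    push_cast
    linear_combination ((u : ℂ) ^ 2 / 4) * Complex.I_sq - (1 / 4 : ℂ) * hu2c
  have hz₂q : z₂ ^ 2 - (K : ℂ) * z₂ + 1 = 0 := by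
    rw [hz₂]
    push_cast
    linear_combination ((u : ℂ) ^ 2 / 4) * Complex.I_sq - (1 / 4 : ℂ) * hu2c
  have habs : ∀ z : ℂ, z.re = K / 2 → z.im = u / 2 ∨ z.im = -(u / 2) → ‖z‖ = 1 := by
    intro z hre him
    rw [Complex.norm_def, Complex.normSq_apply, hre]
    have : z.im ^ 2 = (u / 2) ^ 2 := by rcases him with h | h <;> rw [h] <;> ring
    have h1 : K / 2 * (K / 2) + z.im * z.im = 1 := by
      have := this
      nlinarith [hu2]
    rw [h1, Real.sqrt_one]
  refine ⟨z₁, z₂, ?_, ?_, ?_, ?_, ?_, key z₁ hz₁q, key z₂ hz₂q⟩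
  · intro h
    have := congrArg Complex.im h
    rw [him1, him2] at this
    linarith
  · rw [him1]; positivity
  · rw [him2]; intro h; nlinarith
  · exact habs z₁ hre1 (Or.inl him1)
  · exact habs z₂ hre2 (Or.inr him2)
end

section
/- Let n ∈ ℕ, let A : ℝ → ℝ → Matrix (Fin n) (Fin n) ℝ be such that for each parameter μ the map x ↦ A(x, μ) is continuous, and let V be an orthogonal n×n real matrix such that A(x, −μ) = V · A(x, μ) · Vᵀ for all x, μ. For each μ let U(·, μ) solve U'(x, μ) = A(x, μ) · U(x, μ) with U(0, μ) = I. Then U(x, −μ) = V · U(x, μ) · Vᵀ for all x, μ; in particular the traces of the period maps satisfy Tr U(1, −μ) = Tr U(1, μ) and Tr (U(1, −μ))² = Tr (U(1, μ))², i.e., they are even functions of the parameter μ. -/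
open Matrix

attribute [local instance] Matrix.normedAddCommGroup Matrix.normedSpace

private lemma aux_norm_mul_le {n : ℕ} (M N : Matrix (Fin n) (Fin n) ℝ) :
    ‖M * N‖ ≤ n * ‖M‖ * ‖N‖ := by
  have h0 : (0 : ℝ) ≤ n * ‖M‖ * ‖N‖ := by positivity
  rw [Matrix.norm_le_iff h0]
  intro i j
  calc ‖(M * N) i j‖ = ‖∑ k, M i k * N k j‖ := by rw [Matrix.mul_apply]
    _ ≤ ∑ k, ‖M i k * N k j‖ := norm_sum_le _ _
    _ ≤ ∑ _k : Fin n, ‖M‖ * ‖N‖ := by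
        refine Finset.sum_le_sum fun k _ => ?_
        rw [norm_mul]
        exact mul_le_mul (Matrix.norm_entry_le_entrywise_sup_norm M)
          (Matrix.norm_entry_le_entrywise_sup_norm N) (norm_nonneg _) (norm_nonneg _)
    _ = n * ‖M‖ * ‖N‖ := by
        rw [Finset.sum_const, Finset.card_fin, nsmul_eq_mul, mul_assoc]

/-- If the coefficient matrix of a linear periodic system satisfies the symmetry
`A(x, −μ) = V A(x, μ) Vᵀ` for an orthogonal matrix `V`, then the fundamental
solution satisfies `U(x, −μ) = V U(x, μ) Vᵀ`; in particular the traces of the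
period map and of its square are even functions of the parameter `μ`. -/
theorem monodromy_even_in_parameter
    (n : ℕ) (A : ℝ → ℝ → Matrix (Fin n) (Fin n) ℝ)
    (hAcont : ∀ μ : ℝ, Continuous fun x => A x μ)
    (V : Matrix (Fin n) (Fin n) ℝ) (hV : Vᵀ * V = 1)
    (hsym : ∀ x μ : ℝ, A x (-μ) = V * A x μ * Vᵀ)
    (U : ℝ → ℝ → Matrix (Fin n) (Fin n) ℝ)
    (hU : ∀ μ x : ℝ, HasDerivAt (fun y => U y μ) (A x μ * U x μ) x)
    (hU0 : ∀ μ : ℝ, U 0 μ = 1) :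
    (∀ x μ : ℝ, U x (-μ) = V * U x μ * Vᵀ) ∧
      (∀ μ : ℝ, (U 1 (-μ)).trace = (U 1 μ).trace) ∧
      (∀ μ : ℝ, (U 1 (-μ) * U 1 (-μ)).trace = (U 1 μ * U 1 μ).trace) := by
  have hVV : V * Vᵀ = 1 := mul_eq_one_comm.mp hV
  have key : ∀ x μ : ℝ, U x (-μ) = V * U x μ * Vᵀ := by
    intro x μ
    -- the interval [a, b] contains 0 and x in its interior
    set a : ℝ := min x 0 - 1 with ha_def
    set b : ℝ := max x 0 + 1 with hb_def
    have ha0 : a < 0 := by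
      have : min x 0 ≤ 0 := min_le_right _ _
      simp only [ha_def]; linarith
    have hb0 : (0 : ℝ) < b := by
      have : (0 : ℝ) ≤ max x 0 := le_max_right _ _
      simp only [hb_def]; linarith
    have hxab : x ∈ Set.Icc a b := by
      constructor
      · have : min x 0 ≤ x := min_le_left _ _
        simp only [ha_def]; linarith
      · have : x ≤ max x 0 := le_max_left _ _
        simp only [hb_def]; linarith
    have hab : a ≤ b := le_of_lt (lt_trans ha0 hb0)
    -- clamp to [a, b]
    set cl : ℝ → ℝ := fun t => min (max t a) b with hcl_def
    have hcl_mem : ∀ t, cl t ∈ Set.Icc a b := fun t =>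
      ⟨le_min (le_max_right _ _) hab, min_le_right _ _⟩
    have hcl_id : ∀ t ∈ Set.Icc a b, cl t = t := by
      intro t ht
      simp only [hcl_def]
      rw [max_eq_left ht.1, min_eq_left ht.2]
    have hcl_cont : Continuous cl := (continuous_id.max continuous_const).min continuous_const
    -- bound on ‖A (cl t) μ‖
    obtain ⟨C, hC⟩ := (isCompact_Icc (a := a) (b := b)).exists_bound_of_continuousOn
      ((hAcont μ).continuousOn)
    have hCnn : ∀ t : ℝ, ‖A (cl t) μ‖ ≤ max C 0 :=
      fun t => le_trans (hC _ (hcl_mem t)) (le_max_left _ _)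
    set K : NNReal := (n * max C 0).toNNReal with hK_def
    -- the clamped vector field
    set v : ℝ → Matrix (Fin n) (Fin n) ℝ → Matrix (Fin n) (Fin n) ℝ :=
      fun t y => A (cl t) μ * y with hv_def
    have hlip : ∀ t, LipschitzOnWith K (v t) Set.univ := by
      intro t
      apply LipschitzWith.lipschitzOnWith
      apply LipschitzWith.of_dist_le_mul
      intro y z
      rw [dist_eq_norm, dist_eq_norm]
      have : v t y - v t z = A (cl t) μ * (y - z) := by
        simp only [hv_def]; rw [mul_sub]
      rw [this]
      calc ‖A (cl t) μ * (y - z)‖ ≤ n * ‖A (cl t) μ‖ * ‖y - z‖ := aux_norm_mul_le _ _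
        _ ≤ n * max C 0 * ‖y - z‖ := by
            apply mul_le_mul_of_nonneg_right _ (norm_nonneg _)
            exact mul_le_mul_of_nonneg_left (hCnn t) (Nat.cast_nonneg n)
        _ ≤ (K : ℝ) * ‖y - z‖ := by
            apply mul_le_mul_of_nonneg_right _ (norm_nonneg _)
            rw [hK_def, Real.coe_toNNReal']
            exact le_max_left _ _
    -- the conjugation continuous linear map
    set L : Matrix (Fin n) (Fin n) ℝ →L[ℝ] Matrix (Fin n) (Fin n) ℝ :=
      LinearMap.toContinuousLinearMap
        ((LinearMap.mulLeft ℝ Vᵀ).comp (LinearMap.mulRight ℝ V)) with hL_def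
    have hLapp : ∀ y, L y = Vᵀ * y * V := by
      intro y
      simp [hL_def, LinearMap.mulLeft_apply, LinearMap.mulRight_apply, mul_assoc]
    -- the two solutions
    set f : ℝ → Matrix (Fin n) (Fin n) ℝ := fun t => Vᵀ * U t (-μ) * V with hf_def
    set g : ℝ → Matrix (Fin n) (Fin n) ℝ := fun t => U t μ with hg_def
    have hf' : ∀ t ∈ Set.Icc a b, HasDerivAt f (v t (f t)) t := by
      intro t htm
      have h1 : HasDerivAt (fun s => L (U s (-μ))) (L (A t (-μ) * U t (-μ))) t :=
        L.hasFDerivAt.comp_hasDerivAt t (hU (-μ) t)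
      have h2 : (fun s => L (U s (-μ))) = f := by
        funext s; rw [hLapp, hf_def]
      have h3 : L (A t (-μ) * U t (-μ)) = v t (f t) := by
        rw [hLapp]
        simp only [hv_def, hcl_id t htm, hf_def, hsym t μ]
        calc Vᵀ * (V * A t μ * Vᵀ * U t (-μ)) * V
            = (Vᵀ * V) * (A t μ * (Vᵀ * U t (-μ) * V)) := by noncomm_ring
          _ = A t μ * (Vᵀ * U t (-μ) * V) := by rw [hV, one_mul]
      rw [h2, h3] at h1
      exact h1
    have hg' : ∀ t ∈ Set.Icc a b, HasDerivAt g (v t (g t)) t := by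
      intro t htm
      have := hU μ t
      simpa only [hv_def, hcl_id t htm, hg_def] using this
    have hfc : Continuous f := by
      have : Continuous fun s => U s (-μ) :=
        continuous_iff_continuousAt.mpr fun t => (hU (-μ) t).continuousAt
      exact (continuous_const.matrix_mul this).matrix_mul continuous_const
    have hgc : Continuous g :=
      continuous_iff_continuousAt.mpr fun t => (hU μ t).continuousAt
    have heq : Set.EqOn f g (Set.Icc a b) := by
      apply ODE_solution_unique_of_mem_Icc (fun t _ => hlip t) (t₀ := 0) ⟨ha0, hb0⟩
      · exact hfc.continuousOn
      · exact fun t ht => hf' t (Set.mem_Icc_of_Ioo ht)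
      · exact fun t ht => Set.mem_univ _
      · exact hgc.continuousOn
      · exact fun t ht => hg' t (Set.mem_Icc_of_Ioo ht)
      · exact fun t ht => Set.mem_univ _
      · simp only [hf_def, hg_def, hU0]
        rw [mul_one, hV]
    have hfx : Vᵀ * U x (-μ) * V = U x μ := heq hxab
    calc U x (-μ) = (V * Vᵀ) * U x (-μ) * (V * Vᵀ) := by rw [hVV, one_mul, mul_one]
      _ = V * (Vᵀ * U x (-μ) * V) * Vᵀ := by noncomm_ring
      _ = V * U x μ * Vᵀ := by rw [hfx]
  refine ⟨key, fun μ => ?_, fun μ => ?_⟩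
  · rw [key 1 μ, Matrix.trace_mul_cycle, hV, one_mul]
  · rw [key 1 μ]
    have : V * U 1 μ * Vᵀ * (V * U 1 μ * Vᵀ) = V * (U 1 μ * U 1 μ) * Vᵀ := by
      calc V * U 1 μ * Vᵀ * (V * U 1 μ * Vᵀ)
          = V * U 1 μ * (Vᵀ * V) * U 1 μ * Vᵀ := by noncomm_ring
        _ = V * (U 1 μ * U 1 μ) * Vᵀ := by rw [hV]; noncomm_ring
    rw [this, Matrix.trace_mul_cycle, hV, one_mul]
end
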